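/- Let F be a field with char F ≠ 2. In Fin 4 → F, set w₁ = (1,0,0,0), w₂ = (0,1,0,0), w₃ = (0,0,1,0), w₄ = (0,0,0,1), w₅ = (1,1,1,1), w₆ = (1,−1,−1,0), w₇ = (−1,1,0,−1). Then: (a) the seven 4×4 matrices w₁w₁ᵀ, …, w₇w₇ᵀ are linearly independent over F; and (b) for all (a,b,c,d,e,f,g) ∈ F⁷, the matrix a•w₁w₁ᵀ + b•w₂w₂ᵀ + c•w₃w₃ᵀ + d•w₄w₄ᵀ + e•w₅w₅ᵀ + f•w₆w₆ᵀ + g•w₇w₇ᵀ has rank exactly 1 if and only if exactly one of a, b, c, d, e, f, g is nonzero. -/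

import Mathlib

open Matrix

lemma aux_minor_eq_zero {F : Type*} [Field F] {A : Matrix (Fin 4) (Fin 4) F}
    (h : A.rank ≤ 1) (i j k l : Fin 4) : A i k * A j l - A i l * A j k = 0 := by
  have hmem : ∀ m : Fin 4, (fun i => A i m) ∈ LinearMap.range A.mulVecLin := fun m =>
    ⟨Pi.single m 1, by simp [Matrix.mulVecLin_apply]; rfl⟩
  have hdep : ¬ LinearIndependent F
      ![(⟨fun i => A i k, hmem k⟩ : LinearMap.range A.mulVecLin),
        (⟨fun i => A i l, hmem l⟩ : LinearMap.range A.mulVecLin)] := by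
    intro hli
    have h2le := hli.fintype_card_le_finrank
    simp only [Fintype.card_fin] at h2le
    rw [Matrix.rank] at h
    omega
  rw [LinearIndependent.pair_iff] at hdep
  push_neg at hdep
  obtain ⟨s, t, hst, hne⟩ := hdep
  have hst' : ∀ m, s * A m k + t * A m l = 0 := by
    intro m
    have := congrFun (congrArg Subtype.val hst) m
    simpa using this
  rcases eq_or_ne s 0 with hs | hs
  · have ht : t ≠ 0 := fun h0 => hne hs h0
    have h1 := hst' i
    have h2 := hst' j
    have : t * (A i k * A j l - A i l * A j k) = 0 := by
      linear_combination A i k * h2 - A j k * h1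
    rcases mul_eq_zero.mp this with h | h
    · exact absurd h ht
    · exact h
  · have h1 := hst' i
    have h2 := hst' j
    have : s * (A i k * A j l - A i l * A j k) = 0 := by
      linear_combination A j l * h1 - A i l * h2
    rcases mul_eq_zero.mp this with h | h
    · exact absurd h hs
    · exact h

lemma aux_rank_one {F : Type*} [Field F] (c : F) (v : Fin 4 → F)
    (hc : c ≠ 0) (j : Fin 4) (hv : v j ≠ 0) :
    (c • Matrix.vecMulVec v v).rank = 1 := by
  have hle : (c • Matrix.vecMulVec v v).rank ≤ 1 := by
    have heq : c • Matrix.vecMulVec v v = Matrix.vecMulVec (c • v) v := by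
      ext i k; simp [Matrix.vecMulVec_apply]; ring
    rw [heq, Matrix.vecMulVec_eq (Fin 1)]
    exact (Matrix.rank_mul_le_left _ _).trans
      (by have := Matrix.rank_le_card_width (Matrix.replicateCol (Fin 1) (c • v)); simp at this; exact this)
  have hne : (c • Matrix.vecMulVec v v).rank ≠ 0 := by
    intro h0
    have hcol : (c • Matrix.vecMulVec v v).mulVecLin (Pi.single j 1) = 0 := by
      have hbot : LinearMap.range (c • Matrix.vecMulVec v v).mulVecLin = ⊥ := by
        rw [← Submodule.finrank_eq_zero]
        exact h0
      have := LinearMap.range_eq_bot.mp hbot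
      rw [this]; rfl
    have := congrFun hcol j
    simp [Matrix.mulVecLin_apply, Matrix.vecMulVec_apply] at this
    rcases this with h | h
    · exact hc h
    · exact hv h
  omega

lemma aux_fin7 (j : Fin 7) :
    j = 0 ∨ j = 1 ∨ j = 2 ∨ j = 3 ∨ j = 4 ∨ j = 5 ∨ j = 6 := by omega

lemma aux_main {F : Type*} [Field F] (h2 : (2:F) ≠ 0) (a b c d e f g : F)
    (hrank : (!![a+e+f+g, e-f-g, e-f, e+g;
         e-f-g, b+e+f+g, e+f, e-g;
         e-f, e+f, c+e+f, e;
         e+g, e-g, e, d+e+g] : Matrix (Fin 4) (Fin 4) F).rank = 1) :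
    (a ≠ 0 ∧ b = 0 ∧ c = 0 ∧ d = 0 ∧ e = 0 ∧ f = 0 ∧ g = 0) ∨
      (b ≠ 0 ∧ a = 0 ∧ c = 0 ∧ d = 0 ∧ e = 0 ∧ f = 0 ∧ g = 0) ∨
      (c ≠ 0 ∧ a = 0 ∧ b = 0 ∧ d = 0 ∧ e = 0 ∧ f = 0 ∧ g = 0) ∨
      (d ≠ 0 ∧ a = 0 ∧ b = 0 ∧ c = 0 ∧ e = 0 ∧ f = 0 ∧ g = 0) ∨
      (e ≠ 0 ∧ a = 0 ∧ b = 0 ∧ c = 0 ∧ d = 0 ∧ f = 0 ∧ g = 0) ∨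
      (f ≠ 0 ∧ a = 0 ∧ b = 0 ∧ c = 0 ∧ d = 0 ∧ e = 0 ∧ g = 0) ∨
      (g ≠ 0 ∧ a = 0 ∧ b = 0 ∧ c = 0 ∧ d = 0 ∧ e = 0 ∧ f = 0) := by
  set A : Matrix (Fin 4) (Fin 4) F :=
    !![a+e+f+g, e-f-g, e-f, e+g;
         e-f-g, b+e+f+g, e+f, e-g;
         e-f, e+f, c+e+f, e;
         e+g, e-g, e, d+e+g] with hA
  have minor : ∀ i j k l : Fin 4, A i k * A j l - A i l * A j k = 0 :=
    fun i j k l => aux_minor_eq_zero hrank.le i j k l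
  have m1 : (e-f-g)*e - (e-f)*(e-g) = 0 := minor 0 3 1 2
  have m2 : (e-f)*(e-g) - (e+g)*(e+f) = 0 := minor 0 1 2 3
  have m_ab : (a+e+f+g)*(b+e+f+g) - (e-f-g)*(e-f-g) = 0 := minor 0 1 0 1
  have m_ac : (a+e+f+g)*(c+e+f) - (e-f)*(e-f) = 0 := minor 0 2 0 2
  have m_ad : (a+e+f+g)*(d+e+g) - (e+g)*(e+g) = 0 := minor 0 3 0 3
  have m_bc : (b+e+f+g)*(c+e+f) - (e+f)*(e+f) = 0 := minor 1 2 1 2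
  have m_bd : (b+e+f+g)*(d+e+g) - (e-g)*(e-g) = 0 := minor 1 3 1 3
  have m_cd : (c+e+f)*(d+e+g) - e*e = 0 := minor 2 3 2 3
  have m_ae : (a+e+f+g)*(e+f) - (e-f)*(e-f-g) = 0 := minor 0 1 0 2
  have m_be : (b+e+f+g)*(e-f) - (e+f)*(e-f-g) = 0 := minor 1 0 1 2
  have m_ce : (c+e+f)*(e+g) - (e-f)*e = 0 := minor 2 3 2 0
  have m_de : (d+e+g)*(e-f) - (e+g)*e = 0 := minor 3 2 3 0
  have m_af : (e-f-g)*(e-f) - (e+f)*(a+e+f+g) = 0 := minor 1 0 0 2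
  have m_bf : (e-f-g)*(e+f) - (e-f)*(b+e+f+g) = 0 := minor 0 1 1 2
  have m_cf : (e-f)*(e+f) - (e-f-g)*(c+e+f) = 0 := minor 0 2 2 1
  have m_df : (e-f-g)*(d+e+g) - (e+g)*(e-g) = 0 := minor 0 3 1 3
  have m_ag : (a+e+f+g)*(e-g) - (e+g)*(e-f-g) = 0 := minor 0 1 0 3
  have m_bg : (e-f-g)*(e-g) - (e+g)*(b+e+f+g) = 0 := minor 0 1 1 3
  have m_cg : (e-f-g)*(c+e+f) - (e-f)*(e+f) = 0 := minor 0 2 1 2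
  clear minor
  have hfg : f * g = 0 := by linear_combination -m1
  have hefg : e * (f + g) = 0 := by
    have h2e : (2:F) * (e * (f + g)) = 0 := by linear_combination -m2
    rcases mul_eq_zero.mp h2e with h | h
    · exact absurd h h2
    · exact h
  by_cases hf : f = 0
  · subst hf
    have heg : e * g = 0 := by linear_combination hefg
    by_cases he : e = 0
    · subst he
      by_cases hg : g = 0
      · subst hg
        -- diagonal case
        have hab : a * b = 0 := by linear_combination m_ab
        have hac : a * c = 0 := by linear_combination m_ac
        have had : a * d = 0 := by linear_combination m_ad
        have hbc : b * c = 0 := by linear_combination m_bc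
        have hbd : b * d = 0 := by linear_combination m_bd
        have hcd : c * d = 0 := by linear_combination m_cd
        by_cases ha : a = 0
        · by_cases hb : b = 0
          · by_cases hc : c = 0
            · by_cases hd : d = 0
              · exfalso
                subst ha; subst hb; subst hc; subst hd
                have hz : A = 0 := by
                  rw [hA]; ext i j
                  fin_cases i <;> fin_cases j <;> simp [Matrix.vecHead, Matrix.vecTail]
                rw [hz, Matrix.rank_zero] at hrank
                omega
              · exact Or.inr (Or.inr (Or.inr (Or.inl ⟨hd, ha, hb, hc, rfl, rfl, rfl⟩)))
            · have hd : d = 0 := (mul_eq_zero.mp hcd).resolve_left hc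
              exact Or.inr (Or.inr (Or.inl ⟨hc, ha, hb, hd, rfl, rfl, rfl⟩))
          · have hc : c = 0 := (mul_eq_zero.mp hbc).resolve_left hb
            have hd : d = 0 := (mul_eq_zero.mp hbd).resolve_left hb
            exact Or.inr (Or.inl ⟨hb, ha, hc, hd, rfl, rfl, rfl⟩)
        · have hb : b = 0 := (mul_eq_zero.mp hab).resolve_left ha
          have hc : c = 0 := (mul_eq_zero.mp hac).resolve_left ha
          have hd : d = 0 := (mul_eq_zero.mp had).resolve_left ha
          exact Or.inl ⟨ha, hb, hc, hd, rfl, rfl, rfl⟩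
      · -- g ≠ 0, e = f = 0
        have hag : g * a = 0 := by linear_combination -m_ag
        have hbg : g * b = 0 := by linear_combination -m_bg
        have hcg : g * c = 0 := by linear_combination -m_cg
        have hdg : g * d = 0 := by linear_combination -m_df
        have ha : a = 0 := (mul_eq_zero.mp hag).resolve_left hg
        have hb : b = 0 := (mul_eq_zero.mp hbg).resolve_left hg
        have hc : c = 0 := (mul_eq_zero.mp hcg).resolve_left hg
        have hd : d = 0 := (mul_eq_zero.mp hdg).resolve_left hg
        exact Or.inr (Or.inr (Or.inr (Or.inr (Or.inr (Or.inr
          ⟨hg, ha, hb, hc, hd, rfl, rfl⟩)))))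
    · -- e ≠ 0, f = 0, hence g = 0
      have hg : g = 0 := (mul_eq_zero.mp heg).resolve_left he
      subst hg
      have hae : e * a = 0 := by linear_combination m_ae
      have hbe : e * b = 0 := by linear_combination m_be
      have hce : e * c = 0 := by linear_combination m_ce
      have hde : e * d = 0 := by linear_combination m_de
      have ha : a = 0 := (mul_eq_zero.mp hae).resolve_left he
      have hb : b = 0 := (mul_eq_zero.mp hbe).resolve_left he
      have hc : c = 0 := (mul_eq_zero.mp hce).resolve_left he
      have hd : d = 0 := (mul_eq_zero.mp hde).resolve_left he
      exact Or.inr (Or.inr (Or.inr (Or.inr (Or.inl ⟨he, ha, hb, hc, hd, rfl, rfl⟩))))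
  · -- f ≠ 0, hence g = 0 and e = 0
    have hg : g = 0 := (mul_eq_zero.mp hfg).resolve_left hf
    subst hg
    have hef : e * f = 0 := by linear_combination hefg
    have he : e = 0 := (mul_eq_zero.mp hef).resolve_right hf
    subst he
    have haf : f * a = 0 := by linear_combination -m_af
    have hbf : f * b = 0 := by linear_combination m_bf
    have hcf : f * c = 0 := by linear_combination m_cf
    have hdf : f * d = 0 := by linear_combination -m_df
    have ha : a = 0 := (mul_eq_zero.mp haf).resolve_left hf
    have hb : b = 0 := (mul_eq_zero.mp hbf).resolve_left hf
    have hc : c = 0 := (mul_eq_zero.mp hcf).resolve_left hf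
    have hd : d = 0 := (mul_eq_zero.mp hdf).resolve_left hf
    exact Or.inr (Or.inr (Or.inr (Or.inr (Or.inr (Or.inl ⟨hf, ha, hb, hc, hd, rfl, rfl⟩)))))

set_option maxHeartbeats 1000000 in
/-- Over a field of characteristic ≠ 2, the seven rank-one matrices built from
`e₁, e₂, e₃, e₄, e₁+e₂+e₃+e₄, e₁-e₂-e₃, -e₁+e₂-e₄` are linearly independent, and a linear
combination of them has rank exactly one iff exactly one coefficient is nonzero. -/
theorem stmt4 (F : Type*) [Field F] (hchar : ringChar F ≠ 2) :
    let w : Fin 7 → (Fin 4 → F) :=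
      ![![1,0,0,0], ![0,1,0,0], ![0,0,1,0], ![0,0,0,1],
        ![1,1,1,1], ![1,-1,-1,0], ![-1,1,0,-1]]
    LinearIndependent F (fun i => Matrix.vecMulVec (w i) (w i)) ∧
    ∀ α : Fin 7 → F,
      ((∑ i, α i • Matrix.vecMulVec (w i) (w i)).rank = 1 ↔ ∃! i, α i ≠ 0) := by
  intro w
  have h2 : (2:F) ≠ 0 := by
    intro h
    apply hchar
    have hd : ringChar F ∣ 2 := ringChar.dvd (by exact_mod_cast h)
    exact ((Nat.dvd_prime Nat.prime_two).mp hd).resolve_left CharP.ringChar_ne_one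
  have hwa00 : w 0 (0:Fin 4) = (1:F) := rfl
  have hwb00 : w 0 (⟨0, by omega⟩:Fin 4) = (1:F) := rfl
  have hwa01 : w 0 (1:Fin 4) = (0:F) := rfl
  have hwb01 : w 0 (⟨1, by omega⟩:Fin 4) = (0:F) := rfl
  have hwa02 : w 0 (2:Fin 4) = (0:F) := rfl
  have hwb02 : w 0 (⟨2, by omega⟩:Fin 4) = (0:F) := rfl
  have hwa03 : w 0 (3:Fin 4) = (0:F) := rfl
  have hwb03 : w 0 (⟨3, by omega⟩:Fin 4) = (0:F) := rfl
  have hwa10 : w 1 (0:Fin 4) = (0:F) := rfl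
  have hwb10 : w 1 (⟨0, by omega⟩:Fin 4) = (0:F) := rfl
  have hwa11 : w 1 (1:Fin 4) = (1:F) := rfl
  have hwb11 : w 1 (⟨1, by omega⟩:Fin 4) = (1:F) := rfl
  have hwa12 : w 1 (2:Fin 4) = (0:F) := rfl
  have hwb12 : w 1 (⟨2, by omega⟩:Fin 4) = (0:F) := rfl
  have hwa13 : w 1 (3:Fin 4) = (0:F) := rfl
  have hwb13 : w 1 (⟨3, by omega⟩:Fin 4) = (0:F) := rfl
  have hwa20 : w 2 (0:Fin 4) = (0:F) := rfl
  have hwb20 : w 2 (⟨0, by omega⟩:Fin 4) = (0:F) := rfl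
  have hwa21 : w 2 (1:Fin 4) = (0:F) := rfl
  have hwb21 : w 2 (⟨1, by omega⟩:Fin 4) = (0:F) := rfl
  have hwa22 : w 2 (2:Fin 4) = (1:F) := rfl
  have hwb22 : w 2 (⟨2, by omega⟩:Fin 4) = (1:F) := rfl
  have hwa23 : w 2 (3:Fin 4) = (0:F) := rfl
  have hwb23 : w 2 (⟨3, by omega⟩:Fin 4) = (0:F) := rfl
  have hwa30 : w 3 (0:Fin 4) = (0:F) := rfl
  have hwb30 : w 3 (⟨0, by omega⟩:Fin 4) = (0:F) := rfl
  have hwa31 : w 3 (1:Fin 4) = (0:F) := rfl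
  have hwb31 : w 3 (⟨1, by omega⟩:Fin 4) = (0:F) := rfl
  have hwa32 : w 3 (2:Fin 4) = (0:F) := rfl
  have hwb32 : w 3 (⟨2, by omega⟩:Fin 4) = (0:F) := rfl
  have hwa33 : w 3 (3:Fin 4) = (1:F) := rfl
  have hwb33 : w 3 (⟨3, by omega⟩:Fin 4) = (1:F) := rfl
  have hwa40 : w 4 (0:Fin 4) = (1:F) := rfl
  have hwb40 : w 4 (⟨0, by omega⟩:Fin 4) = (1:F) := rfl
  have hwa41 : w 4 (1:Fin 4) = (1:F) := rfl
  have hwb41 : w 4 (⟨1, by omega⟩:Fin 4) = (1:F) := rfl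
  have hwa42 : w 4 (2:Fin 4) = (1:F) := rfl
  have hwb42 : w 4 (⟨2, by omega⟩:Fin 4) = (1:F) := rfl
  have hwa43 : w 4 (3:Fin 4) = (1:F) := rfl
  have hwb43 : w 4 (⟨3, by omega⟩:Fin 4) = (1:F) := rfl
  have hwa50 : w 5 (0:Fin 4) = (1:F) := rfl
  have hwb50 : w 5 (⟨0, by omega⟩:Fin 4) = (1:F) := rfl
  have hwa51 : w 5 (1:Fin 4) = (-1:F) := rfl
  have hwb51 : w 5 (⟨1, by omega⟩:Fin 4) = (-1:F) := rfl
  have hwa52 : w 5 (2:Fin 4) = (-1:F) := rfl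
  have hwb52 : w 5 (⟨2, by omega⟩:Fin 4) = (-1:F) := rfl
  have hwa53 : w 5 (3:Fin 4) = (0:F) := rfl
  have hwb53 : w 5 (⟨3, by omega⟩:Fin 4) = (0:F) := rfl
  have hwa60 : w 6 (0:Fin 4) = (-1:F) := rfl
  have hwb60 : w 6 (⟨0, by omega⟩:Fin 4) = (-1:F) := rfl
  have hwa61 : w 6 (1:Fin 4) = (1:F) := rfl
  have hwb61 : w 6 (⟨1, by omega⟩:Fin 4) = (1:F) := rfl
  have hwa62 : w 6 (2:Fin 4) = (0:F) := rfl
  have hwb62 : w 6 (⟨2, by omega⟩:Fin 4) = (0:F) := rfl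
  have hwa63 : w 6 (3:Fin 4) = (-1:F) := rfl
  have hwb63 : w 6 (⟨3, by omega⟩:Fin 4) = (-1:F) := rfl
  have hexp : ∀ α : Fin 7 → F, (∑ i, α i • Matrix.vecMulVec (w i) (w i)) =
      !![α 0+α 4+α 5+α 6, α 4-α 5-α 6, α 4-α 5, α 4+α 6;
         α 4-α 5-α 6, α 1+α 4+α 5+α 6, α 4+α 5, α 4-α 6;
         α 4-α 5, α 4+α 5, α 2+α 4+α 5, α 4;
         α 4+α 6, α 4-α 6, α 4, α 3+α 4+α 6] := by
    intro α
    ext i j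
    fin_cases i <;> fin_cases j <;>
      simp only [Fin.sum_univ_seven, Matrix.sum_apply, Matrix.smul_apply,
        Matrix.vecMulVec_apply, smul_eq_mul, hwa00, hwb00, hwa01, hwb01, hwa02, hwb02, hwa03, hwb03, hwa10, hwb10, hwa11, hwb11, hwa12, hwb12, hwa13, hwb13, hwa20, hwb20, hwa21, hwb21, hwa22, hwb22, hwa23, hwb23, hwa30, hwb30, hwa31, hwb31, hwa32, hwb32, hwa33, hwb33, hwa40, hwb40, hwa41, hwb41, hwa42, hwb42, hwa43, hwb43, hwa50, hwb50, hwa51, hwb51, hwa52, hwb52, hwa53, hwb53, hwa60, hwb60, hwa61, hwb61, hwa62, hwb62, hwa63, hwb63] <;>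
      norm_num [Matrix.cons_val_zero, Matrix.cons_val_one, Matrix.head_cons] <;> ring
  constructor
  · rw [Fintype.linearIndependent_iff]
    intro α hα
    rw [hexp α] at hα
    have q00 : α 0 + α 4 + α 5 + α 6 = 0 := congrFun (congrFun hα 0) 0
    have q11 : α 1 + α 4 + α 5 + α 6 = 0 := congrFun (congrFun hα 1) 1
    have q22 : α 2 + α 4 + α 5 = 0 := congrFun (congrFun hα 2) 2
    have q33 : α 3 + α 4 + α 6 = 0 := congrFun (congrFun hα 3) 3
    have q23 : α 4 = 0 := congrFun (congrFun hα 2) 3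
    have q12 : α 4 + α 5 = 0 := congrFun (congrFun hα 1) 2
    have q03 : α 4 + α 6 = 0 := congrFun (congrFun hα 0) 3
    intro i
    rcases aux_fin7 i with rfl | rfl | rfl | rfl | rfl | rfl | rfl
    · linear_combination q00 + q23 - q12 - q03
    · linear_combination q11 + q23 - q12 - q03
    · linear_combination q22 - q12
    · linear_combination q33 - q03
    · linear_combination q23
    · linear_combination q12 - q23
    · linear_combination q03 - q23
  · intro α
    constructor
    · intro hrank
      rw [hexp α] at hrank
      rcases aux_main h2 (α 0) (α 1) (α 2) (α 3) (α 4) (α 5) (α 6) hrank with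
        ⟨hx, z1, z2, z3, z4, z5, z6⟩ | ⟨hx, z1, z2, z3, z4, z5, z6⟩ |
        ⟨hx, z1, z2, z3, z4, z5, z6⟩ | ⟨hx, z1, z2, z3, z4, z5, z6⟩ |
        ⟨hx, z1, z2, z3, z4, z5, z6⟩ | ⟨hx, z1, z2, z3, z4, z5, z6⟩ |
        ⟨hx, z1, z2, z3, z4, z5, z6⟩
      · exact ⟨0, hx, fun j hj => by
          rcases aux_fin7 j with rfl | rfl | rfl | rfl | rfl | rfl | rfl <;>
            first | rfl | exact absurd (by assumption) hj⟩
      · exact ⟨1, hx, fun j hj => by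
          rcases aux_fin7 j with rfl | rfl | rfl | rfl | rfl | rfl | rfl <;>
            first | rfl | exact absurd (by assumption) hj⟩
      · exact ⟨2, hx, fun j hj => by
          rcases aux_fin7 j with rfl | rfl | rfl | rfl | rfl | rfl | rfl <;>
            first | rfl | exact absurd (by assumption) hj⟩
      · exact ⟨3, hx, fun j hj => by
          rcases aux_fin7 j with rfl | rfl | rfl | rfl | rfl | rfl | rfl <;>
            first | rfl | exact absurd (by assumption) hj⟩
      · exact ⟨4, hx, fun j hj => by
          rcases aux_fin7 j with rfl | rfl | rfl | rfl | rfl | rfl | rfl <;>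
            first | rfl | exact absurd (by assumption) hj⟩
      · exact ⟨5, hx, fun j hj => by
          rcases aux_fin7 j with rfl | rfl | rfl | rfl | rfl | rfl | rfl <;>
            first | rfl | exact absurd (by assumption) hj⟩
      · exact ⟨6, hx, fun j hj => by
          rcases aux_fin7 j with rfl | rfl | rfl | rfl | rfl | rfl | rfl <;>
            first | rfl | exact absurd (by assumption) hj⟩
    · rintro ⟨i, hi, huniq⟩
      have hsum : ∑ j, α j • Matrix.vecMulVec (w j) (w j)
          = α i • Matrix.vecMulVec (w i) (w i) := by
        apply Fintype.sum_eq_single i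
        intro j hj
        have hz : α j = 0 := by
          by_contra hne
          exact hj (huniq j hne)
        simp [hz]
      rw [hsum]
      rcases aux_fin7 i with rfl | rfl | rfl | rfl | rfl | rfl | rfl
      · exact aux_rank_one _ _ hi 0 (by rw [hwa00]; exact one_ne_zero)
      · exact aux_rank_one _ _ hi 1 (by rw [hwa11]; exact one_ne_zero)
      · exact aux_rank_one _ _ hi 2 (by rw [hwa22]; exact one_ne_zero)
      · exact aux_rank_one _ _ hi 3 (by rw [hwa33]; exact one_ne_zero)
      · exact aux_rank_one _ _ hi 0 (by rw [hwa40]; exact one_ne_zero)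
      · exact aux_rank_one _ _ hi 0 (by rw [hwa50]; exact one_ne_zero)
      · exact aux_rank_one _ _ hi 0 (by rw [hwa60]; exact neg_ne_zero.mpr one_ne_zero)
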